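/- Let $(X,Y)$ be a random pair with $X \in \mathcal{X}$ and $Y \in \{-1,1\}$, and let $f, g : \mathcal{X} \to \mathbb{R}$ be bounded measurable functions. Then $|\mathcal{R}(\mathrm{sign}\, f) - \mathcal{R}(\mathrm{sign}\, g)| \le \mathbb{P}(\|f - g\|_{L^\infty(\rho_X)} \ge |f(X)|)$, where $\mathcal{R}(c) = \mathbb{P}(c(X) \ne Y)$. -/

import Mathlib

open MeasureTheory
open scoped ENNReal NNReal

noncomputable def rsign (t : ℝ) : ℝ := if 0 < t then 1 else if t < 0 then -1 else 0

lemma abs_le_of_rsign_ne {a b : ℝ} (h : rsign a ≠ rsign b) : |a| ≤ |a - b| := by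
  rcases lt_trichotomy a 0 with ha | ha | ha
  · have hb : ¬ b < 0 := by
      intro hb
      exact h (by simp [rsign, not_lt.mpr ha.le, ha, not_lt.mpr hb.le, hb])
    rw [abs_of_neg ha, abs_of_neg (by linarith [not_lt.mp hb] : a - b < 0)]
    linarith [not_lt.mp hb]
  · simp [ha]
  · have hb : ¬ 0 < b := by
      intro hb
      exact h (by simp [rsign, ha, hb])
    rw [abs_of_pos ha, abs_of_pos (by linarith [not_lt.mp hb] : 0 < a - b)]
    linarith [not_lt.mp hb]

/-- The difference of misclassification risks of `sign f` and `sign g` is bounded by the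
probability that `|f(X)|` is below the `L^∞(ρ_X)` distance between `f` and `g`. -/
theorem risk_diff_le_prob_small_margin
    {Ω 𝓧 : Type*} [MeasurableSpace Ω] [MeasurableSpace 𝓧]
    (ℙ : Measure Ω) [IsProbabilityMeasure ℙ]
    (X : Ω → 𝓧) (Y : Ω → ℝ) (hX : Measurable X)
    (hY : ∀ ω, Y ω = 1 ∨ Y ω = -1)
    (f g : 𝓧 → ℝ) (hf : Measurable f) (hg : Measurable g)
    (Cf : ℝ) (hfb : ∀ x, |f x| ≤ Cf) (Cg : ℝ) (hgb : ∀ x, |g x| ≤ Cg) :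
    |(ℙ {ω | rsign (f (X ω)) ≠ Y ω}).toReal - (ℙ {ω | rsign (g (X ω)) ≠ Y ω}).toReal| ≤
      (ℙ {ω | ENNReal.ofReal |f (X ω)| ≤
          eLpNorm (fun x => f x - g x) ⊤ (Measure.map X ℙ)}).toReal := by
  set μ := Measure.map X ℙ with hμ
  set C := eLpNorm (fun x => f x - g x) ⊤ μ with hC
  set A := {ω | rsign (f (X ω)) ≠ Y ω} with hA
  set B := {ω | rsign (g (X ω)) ≠ Y ω} with hB
  set S := {ω | ENNReal.ofReal |f (X ω)| ≤ C} with hS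
  set D := {ω | rsign (f (X ω)) ≠ rsign (g (X ω))} with hD
  have hAB : A ⊆ B ∪ D := by
    intro ω hω
    by_cases h : rsign (f (X ω)) = rsign (g (X ω))
    · left; exact fun hc => hω (h ▸ hc)
    · right; exact h
  have hBA : B ⊆ A ∪ D := by
    intro ω hω
    by_cases h : rsign (f (X ω)) = rsign (g (X ω))
    · left; exact fun hc => hω (h ▸ hc)
    · right; exact h
  have hDS : ℙ D ≤ ℙ S := by
    apply measure_mono_ae
    have h1 : ∀ᵐ x ∂μ, (‖f x - g x‖₊ : ℝ≥0∞) ≤ C := by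
      rw [hC, eLpNorm_exponent_top]
      exact enorm_ae_le_eLpNormEssSup _ _
    have hmeas : MeasurableSet {x | (‖f x - g x‖₊ : ℝ≥0∞) ≤ C} := by
      apply measurableSet_le _ measurable_const
      exact ((hf.sub hg).nnnorm).coe_nnreal_ennreal
    have h2 : ∀ᵐ ω ∂ℙ, (‖f (X ω) - g (X ω)‖₊ : ℝ≥0∞) ≤ C := by
      rw [hμ] at h1
      exact (ae_map_iff hX.aemeasurable hmeas).mp h1
    filter_upwards [h2] with ω hω hωD
    have habs : |f (X ω)| ≤ |f (X ω) - g (X ω)| := abs_le_of_rsign_ne hωD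
    calc ENNReal.ofReal |f (X ω)|
        ≤ ENNReal.ofReal |f (X ω) - g (X ω)| := ENNReal.ofReal_le_ofReal habs
      _ = (‖f (X ω) - g (X ω)‖₊ : ℝ≥0∞) := by
          rw [← Real.norm_eq_abs]; exact ofReal_norm _
      _ ≤ C := hω
  have h1 : ℙ A ≤ ℙ B + ℙ S :=
    (measure_mono hAB).trans ((measure_union_le _ _).trans (by gcongr))
  have h2 : ℙ B ≤ ℙ A + ℙ S :=
    (measure_mono hBA).trans ((measure_union_le _ _).trans (by gcongr))
  have hfin : ∀ s : Set Ω, ℙ s ≠ ⊤ := fun s => measure_ne_top ℙ s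
  have t1 : (ℙ A).toReal ≤ (ℙ B).toReal + (ℙ S).toReal := by
    rw [← ENNReal.toReal_add (hfin B) (hfin S)]
    exact ENNReal.toReal_mono (ENNReal.add_ne_top.mpr ⟨hfin B, hfin S⟩) h1
  have t2 : (ℙ B).toReal ≤ (ℙ A).toReal + (ℙ S).toReal := by
    rw [← ENNReal.toReal_add (hfin A) (hfin S)]
    exact ENNReal.toReal_mono (ENNReal.add_ne_top.mpr ⟨hfin A, hfin S⟩) h2
  rw [abs_sub_le_iff]
  constructor <;> linarith
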